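/- Let S = {(x, y) ∈ [0,1]² : (x + 1/2)·y = 1/2 and (x − 1)·(y + 3/2) = −1}. Then S = {(1/2, 1/2)}, and conv(S) = conv(S_{(1,0)}) ∩ conv(S_{(0,1)}) ∩ conv(S_{(1,−1)}), where S_{(1,−1)} = {(x, y) ∈ [0,1]² : −(3/2)·x + (3/2)·y = 0}. -/
import Mathlib


open Set

/-- The box `[0,1]²`. -/
def unitSquare : Set (ℝ × ℝ) := {p | p.1 ∈ Icc (0:ℝ) 1 ∧ p.2 ∈ Icc (0:ℝ) 1}

/-- `g₁(x,y) = x·y + (1/2)·y − 1/2`, the first constraint in standard form. -/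
noncomputable def g1 (p : ℝ × ℝ) : ℝ := p.1 * p.2 + (1/2) * p.2 - 1/2

/-- `g₂(x,y) = x·y + (3/2)·x − y − 1/2`, the second constraint in standard form. -/
noncomputable def g2 (p : ℝ × ℝ) : ℝ := p.1 * p.2 + (3/2) * p.1 - p.2 - 1/2

/-- `S = {(x,y) ∈ [0,1]² : (x + 1/2)·y = 1/2, (x − 1)·(y + 3/2) = −1}`. -/
def setS : Set (ℝ × ℝ) :=
  {p ∈ unitSquare | (p.1 + 1/2) * p.2 = 1/2 ∧ (p.1 - 1) * (p.2 + 3/2) = -1}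

/-- The aggregated set `S_λ` with weights `l = (λ₁, λ₂)`. -/
def setAgg (l : ℝ × ℝ) : Set (ℝ × ℝ) :=
  {p ∈ unitSquare | l.1 * g1 p + l.2 * g2 p = 0}

lemma setS_eq : setS = {((1/2 : ℝ), (1/2 : ℝ))} := by
  ext ⟨x, y⟩
  simp only [setS, unitSquare, mem_setOf_eq, mem_singleton_iff, Prod.mk.injEq, mem_Icc]
  constructor
  · rintro ⟨⟨⟨hx0, hx1⟩, ⟨hy0, hy1⟩⟩, h1, h2⟩
    have hyx : y = x := by linear_combination (2/3) * h1 - (2/3) * h2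
    have hq : (x - 1/2) * (x + 1) = 0 := by
      rw [hyx] at h1; linear_combination h1
    rcases mul_eq_zero.1 hq with h | h
    · have hx : x = 1/2 := by linarith
      exact ⟨hx, by rw [hyx, hx]⟩
    · linarith
  · rintro ⟨hx, hy⟩
    subst hx; subst hy
    norm_num

lemma convex_C1 : Convex ℝ {p : ℝ × ℝ | 3/4 ≤ 1/2 * p.1 + p.2} := by
  intro u hu v hv a b ha hb hab
  simp only [mem_setOf_eq] at *
  have h1 : (a • u + b • v).1 = a * u.1 + b * v.1 := rfl
  have h2 : (a • u + b • v).2 = a * u.2 + b * v.2 := rfl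
  rw [h1, h2]
  nlinarith [mul_nonneg ha (by linarith : (0:ℝ) ≤ 1/2 * u.1 + u.2 - 3/4),
    mul_nonneg hb (by linarith : (0:ℝ) ≤ 1/2 * v.1 + v.2 - 3/4)]

lemma convex_C2 : Convex ℝ {p : ℝ × ℝ | 4 * p.1 - p.2 ≤ 3/2} := by
  intro u hu v hv a b ha hb hab
  simp only [mem_setOf_eq] at *
  have h1 : (a • u + b • v).1 = a * u.1 + b * v.1 := rfl
  have h2 : (a • u + b • v).2 = a * u.2 + b * v.2 := rfl
  rw [h1, h2]
  nlinarith [mul_nonneg ha (by linarith : (0:ℝ) ≤ 3/2 - (4 * u.1 - u.2)),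
    mul_nonneg hb (by linarith : (0:ℝ) ≤ 3/2 - (4 * v.1 - v.2))]

lemma convex_C3 : Convex ℝ {p : ℝ × ℝ | p.1 = p.2} := by
  intro u hu v hv a b ha hb hab
  simp only [mem_setOf_eq] at *
  have h1 : (a • u + b • v).1 = a * u.1 + b * v.1 := rfl
  have h2 : (a • u + b • v).2 = a * u.2 + b * v.2 := rfl
  rw [h1, h2, hu, hv]

theorem stmt15 :
    setS = {((1/2 : ℝ), (1/2 : ℝ))} ∧
    setAgg (1, -1) = {p ∈ unitSquare | -(3/2) * p.1 + (3/2) * p.2 = 0} ∧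
    convexHull ℝ setS =
      convexHull ℝ (setAgg (1, 0)) ∩ convexHull ℝ (setAgg (0, 1)) ∩
        convexHull ℝ (setAgg (1, -1)) := by
  refine ⟨setS_eq, ?_, ?_⟩
  · ext p
    simp only [setAgg, g1, g2, mem_setOf_eq]
    constructor
    · rintro ⟨h, e⟩
      exact ⟨h, by linear_combination e⟩
    · rintro ⟨h, e⟩
      exact ⟨h, by linear_combination e⟩
  · -- the convex hull statement
    have hpt : ((1/2 : ℝ), (1/2 : ℝ)) ∈ unitSquare := by
      constructor <;> constructor <;> norm_num
    have hg1 : g1 ((1/2 : ℝ), (1/2 : ℝ)) = 0 := by simp [g1]; norm_num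
    have hg2 : g2 ((1/2 : ℝ), (1/2 : ℝ)) = 0 := by simp [g2]; norm_num
    rw [setS_eq, convexHull_singleton]
    apply Subset.antisymm
    · intro q hq
      rw [mem_singleton_iff] at hq
      subst hq
      refine ⟨⟨?_, ?_⟩, ?_⟩ <;>
        exact subset_convexHull ℝ _ ⟨hpt, by rw [hg1, hg2]; ring⟩
    · rintro q ⟨⟨hq1, hq2⟩, hq3⟩
      have hc1 : convexHull ℝ (setAgg (1, 0)) ⊆ {p : ℝ × ℝ | 3/4 ≤ 1/2 * p.1 + p.2} := by
        apply convexHull_min _ convex_C1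
        rintro ⟨x, y⟩ ⟨⟨⟨hx0, hx1⟩, _⟩, he⟩
        simp only [g1, g2] at he
        simp only [mem_setOf_eq]
        nlinarith [sq_nonneg (x - 1/2), he, hx0]
      have hc2 : convexHull ℝ (setAgg (0, 1)) ⊆ {p : ℝ × ℝ | 4 * p.1 - p.2 ≤ 3/2} := by
        apply convexHull_min _ convex_C2
        rintro ⟨x, y⟩ ⟨⟨⟨hx0, hx1⟩, ⟨hy0, hy1⟩⟩, he⟩
        simp only [g1, g2] at he
        simp only [mem_setOf_eq] at *
        by_contra ht
        push_neg at ht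
        have hx35 : x ≤ 3/5 := by
          nlinarith [mul_nonneg (by linarith : (0:ℝ) ≤ 1 - x) (by linarith : (0:ℝ) ≤ 1 - y)]
        have hpos : 0 < (4 * x - y - 3/2) * (1 - x) :=
          mul_pos (by linarith) (by linarith)
        have key : (4 * x - y - 3/2) * (1 - x) + (2 * x - 1)^2 = 0 := by
          linear_combination he
        nlinarith [sq_nonneg (2 * x - 1)]
      have hc3 : convexHull ℝ (setAgg (1, -1)) ⊆ {p : ℝ × ℝ | p.1 = p.2} := by
        apply convexHull_min _ convex_C3
        rintro ⟨x, y⟩ ⟨_, he⟩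
        simp only [g1, g2] at he
        simp only [mem_setOf_eq]
        linear_combination (-2/3) * he
      have h1 := hc1 hq1
      have h2 := hc2 hq2
      have h3 := hc3 hq3
      simp only [mem_setOf_eq] at h1 h2 h3
      have hq1' : q.1 = 1/2 := by linarith
      have hq2' : q.2 = 1/2 := by linarith
      rw [mem_singleton_iff, Prod.ext_iff]
      exact ⟨hq1', hq2'⟩
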